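/- The set E₀ = {f ∈ l∞(ℕ) : AE(f) = 0} is a unital *-subalgebra of l∞(ℕ) (it contains the constant functions and is closed under addition, multiplication, and complex conjugation), it is closed in the supremum norm, and it is invariant under the shift σ defined by (σf)(n) = f(n+1). -/

import Mathlib

open Filter Set Topology

namespace Anqie

variable {X : Type*} [TopologicalSpace X]

/-- `𝒰` is an open cover of `X`. -/
def IsOpenCover (𝒰 : Set (Set X)) : Prop :=
  (∀ U ∈ 𝒰, IsOpen U) ∧ ⋃₀ 𝒰 = Set.univ

/-- The common refinement `𝒰 ∨ T⁻¹ 𝒰 ∨ ⋯ ∨ T^{-(n-1)} 𝒰`. -/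
def iterJoin (T : X → X) (𝒰 : Set (Set X)) (n : ℕ) : Set (Set X) :=
  {V | ∃ u : Fin n → Set X, (∀ j, u j ∈ 𝒰) ∧ V = ⋂ j : Fin n, T^[(j : ℕ)] ⁻¹' u j}

/-- The minimal cardinality of a finite subcover of `𝒱` (junk value `0` if none exists). -/
noncomputable def coverNum (𝒱 : Set (Set X)) : ℕ :=
  sInf {k | ∃ F : Finset (Set X), (↑F : Set (Set X)) ⊆ 𝒱 ∧
    ⋃₀ (↑F : Set (Set X)) = Set.univ ∧ F.card = k}

/-- The Adler–Konheim–McAndrew entropy of `T` relative to the open cover `𝒰`. -/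
noncomputable def coverEntropy (T : X → X) (𝒰 : Set (Set X)) : EReal :=
  Filter.atTop.limsup fun n : ℕ =>
    ((Real.log (coverNum (iterJoin T 𝒰 n)) / n : ℝ) : EReal)

/-- The Adler–Konheim–McAndrew topological entropy of `T`, via open covers. -/
noncomputable def entropy (T : X → X) : EReal :=
  ⨆ 𝒰 ∈ {𝒰 : Set (Set X) | IsOpenCover 𝒰}, coverEntropy T 𝒰

/-- The set of forward-orbit sequences of `f : ℕ → X` inside `X^ℕ`. -/
def orbitSet (f : ℕ → X) : Set (ℕ → X) :=
  {ω | ∃ n : ℕ, ∀ k : ℕ, ω k = f (n + k)}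

/-- `X_f`, the closure of the set of orbit sequences in the product topology. -/
def orbitClosure (f : ℕ → X) : Set (ℕ → X) := closure (orbitSet f)

lemma shift_mem_orbitClosure (f : ℕ → X) {ω : ℕ → X} (hω : ω ∈ orbitClosure f) :
    (fun k => ω (k + 1)) ∈ orbitClosure f := by
  have hcont : Continuous fun ω : ℕ → X => fun k => ω (k + 1) :=
    continuous_pi fun k => continuous_apply (k + 1)
  have hmaps : MapsTo (fun ω : ℕ → X => fun k => ω (k + 1)) (orbitSet f) (orbitSet f) := by
    rintro ω ⟨n, hn⟩
    refine ⟨n + 1, fun k => ?_⟩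
    show ω (k + 1) = f (n + 1 + k)
    rw [hn (k + 1)]; congr 1; omega
  exact map_mem_closure hcont hω hmaps

/-- `B_f`, the left shift restricted to `X_f`. -/
def shiftOn (f : ℕ → X) : orbitClosure f → orbitClosure f :=
  fun ω => ⟨fun k => (ω : ℕ → X) (k + 1), shift_mem_orbitClosure f ω.2⟩

/-- The anqie entropy of a map `f : ℕ → X`: the AKM topological entropy of the
left shift on `X_f`. -/
noncomputable def AE (f : ℕ → X) : EReal := entropy (shiftOn f)

end Anqie

namespace Anqie

/-- The shift `σ` on `l∞(ℕ)`: `(σ f)(n) = f (n+1)`. -/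
noncomputable def shiftBCF (f : BoundedContinuousFunction ℕ ℂ) : BoundedContinuousFunction ℕ ℂ :=
  f.compContinuous ⟨fun n => n + 1, continuous_of_discreteTopology⟩

end Anqie


namespace Anqie

set_option linter.unusedSectionVars false

/-- An `ε`-net of size `N` (with centers taken among window start indices) for the
length-`n` windows of `f`. -/
def netAt (f : ℕ → ℂ) (ε : ℝ) (n N : ℕ) : Prop :=
  ∃ t : Fin N → ℕ, ∀ i : ℕ, ∃ s : Fin N, ∀ j : Fin n,
    dist (f (i + (j : ℕ))) (f (t s + (j : ℕ))) < ε

/-- Subexponential growth of window counts at every scale. -/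
def SubExp (f : ℕ → ℂ) : Prop :=
  ∀ ε > (0:ℝ), ∀ δ > (0:ℝ), ∀ᶠ n in atTop, ∃ N : ℕ,
    netAt f ε n N ∧ Real.log N ≤ δ * n

lemma netAt_mono {f : ℕ → ℂ} {ε ε' : ℝ} {n N : ℕ} (h : ε ≤ ε') (hf : netAt f ε n N) :
    netAt f ε' n N := by
  obtain ⟨t, ht⟩ := hf
  exact ⟨t, fun i => (ht i).imp fun s hs j => lt_of_lt_of_le (hs j) h⟩

lemma netAt_pos {f : ℕ → ℂ} {ε : ℝ} {n N : ℕ} (hf : netAt f ε n N) : 0 < N := by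
  rcases hf with ⟨t, ht⟩
  rcases ht 0 with ⟨s, -⟩
  exact s.pos

/-- Build a net from a classifier with classes of small diameter. -/
lemma netAt_of_rep {f : ℕ → ℂ} {ε : ℝ} {n : ℕ} {κ : Type*} [Fintype κ] (φ : ℕ → κ)
    (h : ∀ i i', φ i = φ i' → ∀ j : Fin n, dist (f (i + (j : ℕ))) (f (i' + (j : ℕ))) < ε) :
    netAt f ε n (Fintype.card κ) := by
  classical
  let e := Fintype.equivFin κ
  refine ⟨fun s => if hs : ∃ i, φ i = e.symm s then hs.choose else 0, fun i => ?_⟩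
  refine ⟨e (φ i), ?_⟩
  have hex : ∃ i', φ i' = e.symm (e (φ i)) := ⟨i, (e.symm_apply_apply _).symm⟩
  simp only [dif_pos hex]
  have h1 : φ i = φ hex.choose := by
    rw [hex.choose_spec, e.symm_apply_apply]
  exact h i hex.choose h1

lemma netAt_const (c : ℂ) (ε : ℝ) (hε : 0 < ε) (n : ℕ) :
    netAt (fun _ => c) ε n 1 := by
  exact ⟨fun _ => 0, fun i => ⟨0, fun j => by simpa using hε⟩⟩

/-- Bounded sequences admit nets at every scale. -/
lemma netAt_exists {f : ℕ → ℂ} {R : ℝ} (hf : ∀ k, ‖f k‖ ≤ R) {ε : ℝ} (hε : 0 < ε) (n : ℕ) :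
    ∃ N, netAt f ε n N := by
  classical
  have hcpt : IsCompact (Metric.closedBall (0:ℂ) R) := isCompact_closedBall _ _
  obtain ⟨t, -, htfin, htcov⟩ := finite_cover_balls_of_compact hcpt (half_pos hε)
  haveI : Fintype t := htfin.fintype
  have hmem : ∀ k, f k ∈ Metric.closedBall (0:ℂ) R := by
    intro k; simpa [Metric.mem_closedBall, dist_eq_norm] using hf k
  have hsel : ∀ k : ℕ, ∃ c : t, f k ∈ Metric.ball (c : ℂ) (ε/2) := by
    intro k
    have := htcov (hmem k)
    simp only [Set.mem_iUnion] at this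
    obtain ⟨c, hc, hfc⟩ := this
    exact ⟨⟨c, hc⟩, hfc⟩
  choose sel hsel' using hsel
  refine ⟨Fintype.card (Fin n → t), netAt_of_rep (fun i => fun j : Fin n => sel (i + j)) ?_⟩
  intro i i' hphi j
  have h1 := hsel' (i + j)
  have h2 := hsel' (i' + j)
  have hc : sel (i + j) = sel (i' + j) := congrFun hphi j
  rw [hc] at h1
  calc dist (f (i + (j:ℕ))) (f (i' + (j:ℕ)))
      ≤ dist (f (i + (j:ℕ))) ((sel (i' + j) : ℂ)) + dist (f (i' + (j:ℕ))) ((sel (i' + j) : ℂ)) :=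
        dist_triangle_right _ _ _
    _ < ε/2 + ε/2 := by
        exact add_lt_add (by simpa [Metric.mem_ball] using h1) (by simpa [Metric.mem_ball] using h2)
    _ = ε := by ring

lemma netAt_add {f g : ℕ → ℂ} {ε : ℝ} {n N M : ℕ}
    (hf : netAt f ε n N) (hg : netAt g ε n M) :
    netAt (fun k => f k + g k) (4*ε) n (N*M) := by
  classical
  obtain ⟨tf, htf⟩ := hf
  obtain ⟨tg, htg⟩ := hg
  choose sf hsf using htf
  choose sg hsg using htg
  have := netAt_of_rep (f := fun k => f k + g k) (ε := 4*ε) (n := n)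
    (φ := fun i => (sf i, sg i)) ?_
  · simpa using this
  · intro i i' hphi j
    have h1 : sf i = sf i' := congrArg Prod.fst hphi
    have h2 : sg i = sg i' := congrArg Prod.snd hphi
    have df : dist (f (i + (j:ℕ))) (f (i' + (j:ℕ))) < 2*ε := by
      calc dist (f (i + (j:ℕ))) (f (i' + (j:ℕ)))
          ≤ dist (f (i + (j:ℕ))) (f (tf (sf i) + (j:ℕ)))
            + dist (f (i' + (j:ℕ))) (f (tf (sf i) + (j:ℕ))) := dist_triangle_right _ _ _
        _ < ε + ε := add_lt_add (hsf i j) (by rw [h1] at *; exact hsf i' j)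
        _ = 2*ε := by ring
    have dg : dist (g (i + (j:ℕ))) (g (i' + (j:ℕ))) < 2*ε := by
      calc dist (g (i + (j:ℕ))) (g (i' + (j:ℕ)))
          ≤ dist (g (i + (j:ℕ))) (g (tg (sg i) + (j:ℕ)))
            + dist (g (i' + (j:ℕ))) (g (tg (sg i) + (j:ℕ))) := dist_triangle_right _ _ _
        _ < ε + ε := add_lt_add (hsg i j) (by rw [h2] at *; exact hsg i' j)
        _ = 2*ε := by ring
    calc dist (f (i + (j:ℕ)) + g (i + (j:ℕ))) (f (i' + (j:ℕ)) + g (i' + (j:ℕ)))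
        ≤ dist (f (i + (j:ℕ))) (f (i' + (j:ℕ))) + dist (g (i + (j:ℕ))) (g (i' + (j:ℕ))) :=
          dist_add_add_le _ _ _ _
      _ < 2*ε + 2*ε := add_lt_add df dg
      _ = 4*ε := by ring

lemma netAt_mul {f g : ℕ → ℂ} {ε Cf Cg : ℝ} {n N M : ℕ}
    (hε : 0 < ε)
    (hCf : ∀ k, ‖f k‖ ≤ Cf) (hCg : ∀ k, ‖g k‖ ≤ Cg)
    (hf : netAt f ε n N) (hg : netAt g ε n M) :
    netAt (fun k => f k * g k) (2*ε*(Cf+Cg+1)) n (N*M) := by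
  classical
  obtain ⟨tf, htf⟩ := hf
  obtain ⟨tg, htg⟩ := hg
  choose sf hsf using htf
  choose sg hsg using htg
  have hCf0 : 0 ≤ Cf := le_trans (norm_nonneg _) (hCf 0)
  have hCg0 : 0 ≤ Cg := le_trans (norm_nonneg _) (hCg 0)
  have := netAt_of_rep (f := fun k => f k * g k) (ε := 2*ε*(Cf+Cg+1)) (n := n)
    (φ := fun i => (sf i, sg i)) ?_
  · simpa using this
  · intro i i' hphi j
    have h1 : sf i = sf i' := congrArg Prod.fst hphi
    have h2 : sg i = sg i' := congrArg Prod.snd hphi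
    have df : dist (f (i + (j:ℕ))) (f (i' + (j:ℕ))) < 2*ε := by
      calc dist (f (i + (j:ℕ))) (f (i' + (j:ℕ)))
          ≤ dist (f (i + (j:ℕ))) (f (tf (sf i) + (j:ℕ)))
            + dist (f (i' + (j:ℕ))) (f (tf (sf i) + (j:ℕ))) := dist_triangle_right _ _ _
        _ < ε + ε := add_lt_add (hsf i j) (by rw [h1] at *; exact hsf i' j)
        _ = 2*ε := by ring
    have dg : dist (g (i + (j:ℕ))) (g (i' + (j:ℕ))) < 2*ε := by
      calc dist (g (i + (j:ℕ))) (g (i' + (j:ℕ)))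
          ≤ dist (g (i + (j:ℕ))) (g (tg (sg i) + (j:ℕ)))
            + dist (g (i' + (j:ℕ))) (g (tg (sg i) + (j:ℕ))) := dist_triangle_right _ _ _
        _ < ε + ε := add_lt_add (hsg i j) (by rw [h2] at *; exact hsg i' j)
        _ = 2*ε := by ring
    set a := f (i + (j:ℕ)); set b := g (i + (j:ℕ)); set c := f (i' + (j:ℕ)); set d := g (i' + (j:ℕ))
    have key : a*b - c*d = a*(b-d) + (a-c)*d := by ring
    calc dist (a*b) (c*d) = ‖a*b - c*d‖ := dist_eq_norm _ _
      _ = ‖a*(b-d) + (a-c)*d‖ := by rw [key]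
      _ ≤ ‖a*(b-d)‖ + ‖(a-c)*d‖ := norm_add_le _ _
      _ = ‖a‖*‖b-d‖ + ‖a-c‖*‖d‖ := by rw [norm_mul, norm_mul]
      _ ≤ Cf*(2*ε) + (2*ε)*Cg := by
          gcongr
          · exact hCf _
          · exact le_of_lt (by simpa [dist_eq_norm] using dg)
          · exact le_of_lt (by simpa [dist_eq_norm] using df)
          · exact hCg _
      _ < 2*ε*(Cf+Cg+1) := by nlinarith

lemma netAt_star {f : ℕ → ℂ} {ε : ℝ} {n N : ℕ} (hf : netAt f ε n N) :
    netAt (fun k => (starRingEnd ℂ) (f k)) ε n N := by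
  obtain ⟨t, ht⟩ := hf
  exact ⟨t, fun i => (ht i).imp fun s hs j => by
    simpa [Complex.dist_conj_conj] using hs j⟩

lemma netAt_shift {f : ℕ → ℂ} {ε : ℝ} {n N : ℕ} (hf : netAt f ε n N) :
    netAt (fun k => f (k+1)) (2*ε) n N := by
  classical
  obtain ⟨t, ht⟩ := hf
  choose s hs using fun i => ht (i+1)
  have := netAt_of_rep (f := fun k => f (k+1)) (ε := 2*ε) (n := n) (φ := s) ?_
  · simpa using this
  · intro i i' hphi j
    have h1 := hs i j
    have h2 := hs i' j
    rw [hphi] at h1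
    have e1 : i + 1 + (j:ℕ) = i + (j:ℕ) + 1 := by omega
    have e2 : i' + 1 + (j:ℕ) = i' + (j:ℕ) + 1 := by omega
    rw [e1] at h1; rw [e2] at h2
    calc dist (f (i + (j:ℕ) + 1)) (f (i' + (j:ℕ) + 1))
        ≤ dist (f (i + (j:ℕ) + 1)) (f (t (s i') + (j:ℕ)))
          + dist (f (i' + (j:ℕ) + 1)) (f (t (s i') + (j:ℕ))) := dist_triangle_right _ _ _
      _ < ε + ε := add_lt_add h1 h2
      _ = 2*ε := by ring

lemma netAt_near {f g : ℕ → ℂ} {ε d : ℝ} {n N : ℕ}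
    (hfg : ∀ k, dist (f k) (g k) ≤ d) (hg : netAt g ε n N) :
    netAt f (ε + 2*d) n N := by
  obtain ⟨t, ht⟩ := hg
  refine ⟨t, fun i => (ht i).imp fun s hs j => ?_⟩
  calc dist (f (i + (j:ℕ))) (f (t s + (j:ℕ)))
      ≤ dist (f (i + (j:ℕ))) (g (i + (j:ℕ))) + dist (g (i + (j:ℕ))) (g (t s + (j:ℕ)))
        + dist (g (t s + (j:ℕ))) (f (t s + (j:ℕ))) := dist_triangle4 _ _ _ _
    _ < d + ε + d := by
        have h3 : dist (g (t s + (j:ℕ))) (f (t s + (j:ℕ))) ≤ d := by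
          rw [dist_comm]; exact hfg _
        have := hfg (i + (j:ℕ))
        -- d + ε + d with middle strict
        have hmid := hs j
        nlinarith [hfg (i + (j:ℕ)), h3, hmid]
    _ = ε + 2*d := by ring

lemma log_nat_mul_le {N M : ℕ} (hN : 0 < N) (hM : 0 < M) :
    Real.log ((N*M : ℕ) : ℝ) = Real.log N + Real.log M := by
  push_cast
  rw [Real.log_mul (by positivity) (by positivity)]

lemma subExp_const (c : ℂ) : SubExp (fun _ => c) := by
  intro ε hε δ hδ
  filter_upwards [eventually_ge_atTop 0] with n _
  exact ⟨1, netAt_const c ε hε n, by simpa using by positivity⟩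

lemma subExp_add {f g : ℕ → ℂ} (hf : SubExp f) (hg : SubExp g) :
    SubExp (fun k => f k + g k) := by
  intro ε hε δ hδ
  filter_upwards [hf (ε/4) (by positivity) (δ/2) (by positivity),
    hg (ε/4) (by positivity) (δ/2) (by positivity)] with n ⟨N, hN, hNl⟩ ⟨M, hM, hMl⟩
  refine ⟨N*M, by simpa [show 4*(ε/4) = ε by ring] using netAt_add hN hM, ?_⟩
  rw [log_nat_mul_le (netAt_pos hN) (netAt_pos hM)]
  calc Real.log N + Real.log M ≤ δ/2*n + δ/2*n := add_le_add hNl hMl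
    _ = δ * n := by ring

lemma subExp_mul {f g : ℕ → ℂ} {Cf Cg : ℝ}
    (hCf : ∀ k, ‖f k‖ ≤ Cf) (hCg : ∀ k, ‖g k‖ ≤ Cg)
    (hf : SubExp f) (hg : SubExp g) :
    SubExp (fun k => f k * g k) := by
  intro ε hε δ hδ
  have hC0 : (0:ℝ) < Cf + Cg + 1 := by
    have := le_trans (norm_nonneg _) (hCf 0)
    have := le_trans (norm_nonneg _) (hCg 0)
    linarith
  set e := ε / (2*(Cf+Cg+1)) with he
  have he0 : 0 < e := by positivity
  filter_upwards [hf e he0 (δ/2) (by positivity),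
    hg e he0 (δ/2) (by positivity)] with n ⟨N, hN, hNl⟩ ⟨M, hM, hMl⟩
  refine ⟨N*M, ?_, ?_⟩
  · have := netAt_mul he0 hCf hCg hN hM
    have heq : 2*e*(Cf+Cg+1) = ε := by
      rw [he]; field_simp
    rwa [heq] at this
  · rw [log_nat_mul_le (netAt_pos hN) (netAt_pos hM)]
    calc Real.log N + Real.log M ≤ δ/2*n + δ/2*n := add_le_add hNl hMl
      _ = δ * n := by ring

lemma subExp_star {f : ℕ → ℂ} (hf : SubExp f) : SubExp (fun k => (starRingEnd ℂ) (f k)) := by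
  intro ε hε δ hδ
  filter_upwards [hf ε hε δ hδ] with n ⟨N, hN, hNl⟩
  exact ⟨N, netAt_star hN, hNl⟩

lemma subExp_shift {f : ℕ → ℂ} (hf : SubExp f) : SubExp (fun k => f (k+1)) := by
  intro ε hε δ hδ
  filter_upwards [hf (ε/2) (by positivity) δ hδ] with n ⟨N, hN, hNl⟩
  exact ⟨N, by simpa [show 2*(ε/2) = ε by ring] using netAt_shift hN, hNl⟩

section General
variable {X : Type*} [TopologicalSpace X]

lemma univ_mem_iterJoin (T : X → X) (n : ℕ) :
    (Set.univ : Set X) ∈ iterJoin T {Set.univ} n := by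
  refine ⟨fun _ => Set.univ, fun j => rfl, ?_⟩
  ext x; simp

lemma coverNum_singleton_univ (T : X → X) [Nonempty X] (n : ℕ) :
    coverNum (iterJoin T {Set.univ} n) = 1 := by
  have h1 : (1:ℕ) ∈ {k | ∃ F : Finset (Set X), (↑F : Set (Set X)) ⊆ iterJoin T {Set.univ} n ∧
      ⋃₀ (↑F : Set (Set X)) = Set.univ ∧ F.card = k} := by
    refine ⟨{Set.univ}, ?_, ?_, ?_⟩
    · intro U hU
      simp only [Finset.coe_singleton, Set.mem_singleton_iff] at hU
      rw [hU]; exact univ_mem_iterJoin T n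
    · simp
    · simp
  refine le_antisymm (Nat.sInf_le h1) ?_
  rw [Nat.one_le_iff_ne_zero]
  intro h0
  rw [coverNum, Nat.sInf_eq_zero] at h0
  rcases h0 with h0 | h0
  · obtain ⟨F, -, hcov, hcard⟩ := h0
    rw [Finset.card_eq_zero] at hcard
    subst hcard
    simp only [Finset.coe_empty, Set.sUnion_empty] at hcov
    exact (Set.univ_nonempty.ne_empty hcov.symm).elim
  · rw [Set.eq_empty_iff_forall_notMem] at h0
    exact h0 1 h1

lemma zero_le_entropy [Nonempty X] (T : X → X) : 0 ≤ entropy T := by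
  have hcov : IsOpenCover ({Set.univ} : Set (Set X)) := by
    constructor
    · intro U hU; rw [Set.mem_singleton_iff] at hU; rw [hU]; exact isOpen_univ
    · simp
  have : coverEntropy T {Set.univ} = 0 := by
    unfold coverEntropy
    have : (fun n : ℕ => ((Real.log (coverNum (iterJoin T {Set.univ} n)) / n : ℝ) : EReal))
        = fun _ => (0 : EReal) := by
      funext n
      rw [coverNum_singleton_univ T n]
      simp
    rw [this, limsup_const]
  calc (0:EReal) = coverEntropy T {Set.univ} := this.symm
    _ ≤ entropy T := by
        apply le_iSup₂ (f := fun 𝒰 (_ : 𝒰 ∈ {𝒰 : Set (Set X) | IsOpenCover 𝒰}) => coverEntropy T 𝒰)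
        exact hcov

lemma iterJoin_isOpenCover {T : X → X} {𝒰 : Set (Set X)} (hT : Continuous T)
    (h𝒰 : IsOpenCover 𝒰) (n : ℕ) :
    (∀ V ∈ iterJoin T 𝒰 n, IsOpen V) ∧ ∀ x : X, ∃ V ∈ iterJoin T 𝒰 n, x ∈ V := by
  constructor
  · rintro V ⟨u, hu, rfl⟩
    exact isOpen_iInter_of_finite fun j =>
      ((hT.iterate (j:ℕ)).isOpen_preimage _ (h𝒰.1 _ (hu j)))
  · intro x
    have hx : ∀ j : Fin n, ∃ U ∈ 𝒰, T^[(j:ℕ)] x ∈ U := by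
      intro j
      have : T^[(j:ℕ)] x ∈ ⋃₀ 𝒰 := h𝒰.2.symm ▸ Set.mem_univ _
      exact this
    choose u hu hxu using hx
    exact ⟨⋂ j : Fin n, T^[(j:ℕ)] ⁻¹' u j, ⟨u, hu, rfl⟩, Set.mem_iInter.2 hxu⟩

/-- On a compact space a finite subcover of `iterJoin` exists. -/
lemma exists_finite_subcover [CompactSpace X] {T : X → X} {𝒰 : Set (Set X)}
    (hT : Continuous T) (h𝒰 : IsOpenCover 𝒰) (n : ℕ) :
    ∃ F : Finset (Set X), (↑F : Set (Set X)) ⊆ iterJoin T 𝒰 n ∧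
      ⋃₀ (↑F : Set (Set X)) = Set.univ := by
  classical
  obtain ⟨hopen, hcov⟩ := iterJoin_isOpenCover hT h𝒰 n
  have hsub : (Set.univ : Set X) ⊆ ⋃ V : ↥(iterJoin T 𝒰 n), (V : Set X) := by
    intro x _
    obtain ⟨V, hV, hxV⟩ := hcov x
    exact Set.mem_iUnion.2 ⟨⟨V, hV⟩, hxV⟩
  obtain ⟨t, ht⟩ := isCompact_univ.elim_finite_subcover
    (fun V : ↥(iterJoin T 𝒰 n) => (V : Set X)) (fun V => hopen _ V.2) hsub
  refine ⟨t.image Subtype.val, ?_, ?_⟩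
  · intro U hU
    obtain ⟨W, -, rfl⟩ := Finset.mem_image.1 (Finset.mem_coe.1 hU)
    exact W.2
  · apply Set.eq_univ_of_univ_subset
    intro x hx
    obtain ⟨W, hWt, hxW⟩ := Set.mem_iUnion₂.1 (ht hx)
    exact Set.mem_sUnion.2 ⟨(W : Set X),
      Finset.mem_coe.2 (Finset.mem_image_of_mem _ hWt), hxW⟩

lemma coverNum_pos [Nonempty X] {𝒱 : Set (Set X)}
    (h : ∃ F : Finset (Set X), (↑F : Set (Set X)) ⊆ 𝒱 ∧ ⋃₀ (↑F : Set (Set X)) = Set.univ) :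
    0 < coverNum 𝒱 ∧ ∃ F : Finset (Set X), (↑F : Set (Set X)) ⊆ 𝒱 ∧
      ⋃₀ (↑F : Set (Set X)) = Set.univ ∧ F.card = coverNum 𝒱 := by
  obtain ⟨F, hF1, hF2⟩ := h
  have hne : {k | ∃ F : Finset (Set X), (↑F : Set (Set X)) ⊆ 𝒱 ∧
      ⋃₀ (↑F : Set (Set X)) = Set.univ ∧ F.card = k}.Nonempty := ⟨F.card, F, hF1, hF2, rfl⟩
  have hmem : ∃ G : Finset (Set X), (↑G : Set (Set X)) ⊆ 𝒱 ∧
      ⋃₀ (↑G : Set (Set X)) = Set.univ ∧ G.card = coverNum 𝒱 := Nat.sInf_mem hne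
  refine ⟨?_, hmem⟩
  refine Nat.pos_of_ne_zero ?_
  intro h
  obtain ⟨G, -, hGcov, hGcard⟩ := hmem
  rw [h, Finset.card_eq_zero] at hGcard
  subst hGcard
  simp only [Finset.coe_empty, Set.sUnion_empty] at hGcov
  exact Set.univ_nonempty.ne_empty hGcov.symm

end General

/-- The orbit point `f(i+·)` of `X_f`. -/
def pt (f : ℕ → ℂ) (i : ℕ) : ↥(orbitClosure f) :=
  ⟨fun k => f (i + k), subset_closure ⟨i, fun _ => rfl⟩⟩

instance orbitClosure_nonempty (f : ℕ → ℂ) : Nonempty ↥(orbitClosure f) := ⟨pt f 0⟩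

lemma compactSpace_orbitClosure {f : ℕ → ℂ} {R : ℝ} (hf : ∀ k, ‖f k‖ ≤ R) :
    CompactSpace ↥(orbitClosure f) := by
  rw [← isCompact_iff_compactSpace]
  have hK : IsCompact (Metric.closedBall (0:ℂ) R) := isCompact_closedBall _ _
  have hC : IsCompact (Set.univ.pi (fun _ : ℕ => Metric.closedBall (0:ℂ) R)) :=
    isCompact_univ_pi fun _ => hK
  apply IsCompact.of_isClosed_subset hC isClosed_closure
  apply closure_minimal ?_ (isClosed_set_pi fun a _ => Metric.isClosed_closedBall)
  rintro ω ⟨n, hn⟩ k -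
  rw [hn k]
  simpa [Metric.mem_closedBall, dist_eq_norm] using hf (n + k)

lemma continuous_shiftOn (f : ℕ → ℂ) : Continuous (shiftOn f) := by
  apply Continuous.subtype_mk
  exact continuous_pi fun k => (continuous_apply (k + 1)).comp continuous_subtype_val

lemma shiftOn_iterate_coord (f : ℕ → ℂ) (m : ℕ) (ω : ↥(orbitClosure f)) (k : ℕ) :
    (((shiftOn f)^[m] ω : ℕ → ℂ)) k = (ω : ℕ → ℂ) (k + m) := by
  induction m generalizing ω with
  | zero => rfl
  | succ m ih =>
    rw [Function.iterate_succ_apply, ih (shiftOn f ω)]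
    show (ω : ℕ → ℂ) (k + m + 1) = (ω : ℕ → ℂ) (k + (m + 1))
    congr 1

lemma pt_coord (f : ℕ → ℂ) (i k : ℕ) : ((pt f i : ℕ → ℂ)) k = f (i + k) := rfl

lemma isOpen_cyl (x : ℕ → ℂ) (m : ℕ) (e : ℝ) :
    IsOpen {ξ : ℕ → ℂ | ∀ j, j < m → dist (ξ j) (x j) < e} := by
  have : {ξ : ℕ → ℂ | ∀ j, j < m → dist (ξ j) (x j) < e}
      = ⋂ j ∈ Finset.range m, (fun ξ : ℕ → ℂ => ξ j) ⁻¹' Metric.ball (x j) e := by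
    ext ξ
    simp [Metric.mem_ball, Finset.mem_range]
  rw [this]
  exact isOpen_biInter_finset fun j _ => (continuous_apply j).isOpen_preimage _ Metric.isOpen_ball

/-- Window approximation: any point of `X_f` is coordinatewise close to an orbit window. -/
lemma orbit_approx (f : ℕ → ℂ) (ω : ↥(orbitClosure f)) (m : ℕ) {ε : ℝ} (hε : 0 < ε) :
    ∃ i, ∀ j, j < m → dist ((ω : ℕ → ℂ) j) (f (i + j)) < ε := by
  have hO := isOpen_cyl (ω : ℕ → ℂ) m ε
  have hmem : (ω : ℕ → ℂ) ∈ {ξ : ℕ → ℂ | ∀ j, j < m → dist (ξ j) ((ω : ℕ → ℂ) j) < ε} :=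
    fun j _ => by simpa using hε
  obtain ⟨ξ, hξO, i, hξ⟩ := mem_closure_iff.1 ω.2 _ hO hmem
  refine ⟨i, fun j hj => ?_⟩
  have := hξO j hj
  rwa [hξ j, dist_comm] at this

/-- Lebesgue-type lemma for cylinder sets. -/
lemma lebesgue_cyl {f : ℕ → ℂ} [CompactSpace ↥(orbitClosure f)]
    {𝒲 : Set (Set ↥(orbitClosure f))} (h𝒲 : IsOpenCover 𝒲) :
    ∃ (m : ℕ) (ε : ℝ), 0 < ε ∧ ∀ ω : ↥(orbitClosure f), ∃ W ∈ 𝒲,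
      ∀ η : ↥(orbitClosure f),
        (∀ j, j < m → dist ((η : ℕ → ℂ) j) ((ω : ℕ → ℂ) j) < ε) → η ∈ W := by
  classical
  have key : ∀ ω : ↥(orbitClosure f), ∃ (m : ℕ) (e : ℝ) (W : Set ↥(orbitClosure f)),
      0 < e ∧ W ∈ 𝒲 ∧ ∀ η : ↥(orbitClosure f),
        (∀ j, j < m → dist ((η : ℕ → ℂ) j) ((ω : ℕ → ℂ) j) < e) → η ∈ W := by
    intro ω
    have hωW : (ω : ↥(orbitClosure f)) ∈ ⋃₀ 𝒲 := h𝒲.2.symm ▸ Set.mem_univ _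
    obtain ⟨W, hW𝒲, hωW⟩ := hωW
    obtain ⟨O, hO, hWO⟩ := isOpen_induced_iff.1 (h𝒲.1 W hW𝒲)
    have hωO : (ω : ℕ → ℂ) ∈ O := by rw [← hWO] at hωW; exact hωW
    obtain ⟨I, u, hIu, hIpi⟩ := isOpen_pi_iff.1 hO _ hωO
    have key2 : ∀ i ∈ I, ∃ e > 0, Metric.ball ((ω : ℕ → ℂ) i) e ⊆ u i := fun i hi =>
      Metric.isOpen_iff.1 (hIu i hi).1 _ (hIu i hi).2
    choose! ef hef hball using key2
    obtain ⟨e, he, hele⟩ : ∃ e > 0, ∀ i ∈ I, e ≤ ef i := by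
      rcases I.eq_empty_or_nonempty with h | h
      · exact ⟨1, one_pos, by simp [h]⟩
      · exact ⟨I.inf' h ef, (Finset.lt_inf'_iff h).2 fun i hi => hef i hi,
          fun i hi => Finset.inf'_le _ hi⟩
    refine ⟨I.sup id + 1, e, W, he, hW𝒲, ?_⟩
    intro η hη
    rw [← hWO]
    apply hIpi
    intro i hi
    have hilt : i < I.sup id + 1 := Nat.lt_succ_of_le (Finset.le_sup (f := id) hi)
    exact hball i hi (Metric.mem_ball.2 (lt_of_lt_of_le (hη i hilt) (hele i hi)))
  choose mf εf Wf hεf hWf hprop using key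
  set G : ↥(orbitClosure f) → Set ↥(orbitClosure f) := fun ω =>
    Subtype.val ⁻¹' {ξ : ℕ → ℂ | ∀ j, j < mf ω → dist (ξ j) ((ω : ℕ → ℂ) j) < εf ω / 2} with hG
  have hGopen : ∀ ω, IsOpen (G ω) := fun ω =>
    (isOpen_cyl _ _ _).preimage continuous_subtype_val
  have hcov : (Set.univ : Set ↥(orbitClosure f)) ⊆ ⋃ ω, G ω := by
    intro ω _
    exact Set.mem_iUnion.2 ⟨ω, fun j _ => by simpa using half_pos (hεf ω)⟩
  obtain ⟨t, ht⟩ := isCompact_univ.elim_finite_subcover G hGopen hcov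
  have htne : t.Nonempty := by
    rcases t.eq_empty_or_nonempty with h | h
    · exfalso
      have := ht (Set.mem_univ (Classical.arbitrary ↥(orbitClosure f)))
      simp [h] at this
    · exact h
  refine ⟨t.sup mf, t.inf' htne (fun ω => εf ω / 2),
    (Finset.lt_inf'_iff htne).2 fun ω _ => half_pos (hεf ω), ?_⟩
  intro ω
  obtain ⟨ω₀, hω₀t, hωG⟩ := Set.mem_iUnion₂.1 (ht (Set.mem_univ ω))
  refine ⟨Wf ω₀, hWf ω₀, ?_⟩
  intro η hη
  apply hprop ω₀
  intro j hj
  have hjm : j < t.sup mf := lt_of_lt_of_le hj (Finset.le_sup hω₀t)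
  have h1 : dist ((η : ℕ → ℂ) j) ((ω : ℕ → ℂ) j) < t.inf' htne (fun ω => εf ω / 2) := hη j hjm
  have h2 : dist ((ω : ℕ → ℂ) j) ((ω₀ : ℕ → ℂ) j) < εf ω₀ / 2 := hωG j hj
  have h3 : t.inf' htne (fun ω => εf ω / 2) ≤ εf ω₀ / 2 := Finset.inf'_le _ hω₀t
  calc dist ((η : ℕ → ℂ) j) ((ω₀ : ℕ → ℂ) j)
      ≤ dist ((η : ℕ → ℂ) j) ((ω : ℕ → ℂ) j) + dist ((ω : ℕ → ℂ) j) ((ω₀ : ℕ → ℂ) j) :=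
        dist_triangle _ _ _
    _ < εf ω₀ / 2 + εf ω₀ / 2 := add_lt_add (lt_of_lt_of_le h1 h3) h2
    _ = εf ω₀ := by ring


end Anqie

namespace Anqie

/-- From a net of length `n+m` windows, bound the subcover number of `iterJoin`. -/
lemma coverNum_iterJoin_le {f : ℕ → ℂ} {𝒲 : Set (Set ↥(orbitClosure f))}
    {m n N : ℕ} {ε : ℝ} (hε : 0 < ε)
    (hleb : ∀ ω : ↥(orbitClosure f), ∃ W ∈ 𝒲, ∀ η : ↥(orbitClosure f),
      (∀ j, j < m → dist ((η : ℕ → ℂ) j) ((ω : ℕ → ℂ) j) < ε) → η ∈ W)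
    (hnet : netAt f (ε/2) (n+m) N) :
    coverNum (iterJoin (shiftOn f) 𝒲 n) ≤ N := by
  classical
  obtain ⟨t, ht⟩ := hnet
  have hW : ∀ s : Fin N, ∀ j : Fin n, ∃ W ∈ 𝒲, ∀ η : ↥(orbitClosure f),
      (∀ k, k < m → dist ((η : ℕ → ℂ) k) ((pt f (t s + (j:ℕ)) : ℕ → ℂ) k) < ε) → η ∈ W :=
    fun s j => hleb (pt f (t s + (j:ℕ)))
  choose W hW𝒲 hWp using hW
  set V : Fin N → Set ↥(orbitClosure f) :=
    fun s => ⋂ j : Fin n, (shiftOn f)^[(j:ℕ)] ⁻¹' W s j with hV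
  have hVmem : ∀ s, V s ∈ iterJoin (shiftOn f) 𝒲 n := fun s => ⟨W s, fun j => hW𝒲 s j, rfl⟩
  have hVcov : ∀ η : ↥(orbitClosure f), ∃ s, η ∈ V s := by
    intro η
    obtain ⟨i, hi⟩ := orbit_approx f η (n+m) (half_pos hε)
    obtain ⟨s, hs⟩ := ht i
    refine ⟨s, Set.mem_iInter.2 fun j => ?_⟩
    apply hWp s j
    intro k hk
    rw [shiftOn_iterate_coord]
    have hkj : (k + (j:ℕ)) < n + m := by omega
    have h1 : dist ((η : ℕ → ℂ) (k + (j:ℕ))) (f (i + (k + (j:ℕ)))) < ε/2 := hi _ hkj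
    have h2 : dist (f (i + (k + (j:ℕ)))) (f (t s + (k + (j:ℕ)))) < ε/2 := by
      have := hs ⟨k + (j:ℕ), hkj⟩
      simpa using this
    have h3 : ((pt f (t s + (j:ℕ)) : ℕ → ℂ)) k = f (t s + (k + (j:ℕ))) := by
      rw [pt_coord]; congr 1; omega
    rw [h3]
    calc dist ((η : ℕ → ℂ) (k + (j:ℕ))) (f (t s + (k + (j:ℕ))))
        ≤ dist ((η : ℕ → ℂ) (k + (j:ℕ))) (f (i + (k + (j:ℕ))))
          + dist (f (i + (k + (j:ℕ)))) (f (t s + (k + (j:ℕ)))) := dist_triangle _ _ _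
      _ < ε/2 + ε/2 := add_lt_add h1 h2
      _ = ε := by ring
  refine le_trans (Nat.sInf_le ⟨Finset.image V Finset.univ, ?_, ?_, rfl⟩) ?_
  · intro U hU
    obtain ⟨s, -, rfl⟩ := Finset.mem_image.1 (Finset.mem_coe.1 hU)
    exact hVmem s
  · apply Set.eq_univ_of_univ_subset
    intro η _
    obtain ⟨s, hs⟩ := hVcov η
    exact Set.mem_sUnion.2 ⟨V s,
      Finset.mem_coe.2 (Finset.mem_image_of_mem _ (Finset.mem_univ s)), hs⟩
  · exact le_trans Finset.card_image_le (by simp)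

lemma AE_le_zero {f : ℕ → ℂ} {R : ℝ} (hfb : ∀ k, ‖f k‖ ≤ R) (hsub : SubExp f) :
    AE f ≤ 0 := by
  haveI := compactSpace_orbitClosure hfb
  have main : entropy (shiftOn f) ≤ 0 := by
    unfold entropy
    refine iSup₂_le fun 𝒲 h𝒲 => ?_
    obtain ⟨m, ε, hε, hleb⟩ := lebesgue_cyl h𝒲
    by_contra hlt
    rw [not_le] at hlt
    obtain ⟨z, hz0, hzL⟩ := exists_between hlt
    have hzt : z ≠ ⊤ := (lt_of_lt_of_le hzL le_top).ne
    have hzb : z ≠ ⊥ := (lt_of_le_of_lt bot_le hz0).ne'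
    set δ := z.toReal with hδdef
    have hzcoe : ((δ : ℝ) : EReal) = z := EReal.coe_toReal hzt hzb
    have hδ0 : (0:ℝ) < δ := by
      rw [← EReal.coe_lt_coe_iff]
      rw [hzcoe]
      exact_mod_cast hz0
    obtain ⟨a, ha⟩ := eventually_atTop.1 (hsub (ε/2) (half_pos hε) (δ/2) (by positivity))
    have hev2 : ∀ᶠ n : ℕ in atTop,
        ((Real.log (coverNum (iterJoin (shiftOn f) 𝒲 n)) / n : ℝ) : EReal) ≤ ((δ:ℝ) : EReal) := by
      rw [eventually_atTop]
      refine ⟨max a (max m 1), fun n hn => ?_⟩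
      have hna : a ≤ n + m := le_trans (le_trans (le_max_left _ _) hn) (Nat.le_add_right _ _)
      obtain ⟨N, hN, hNl⟩ := ha (n+m) hna
      have hc := coverNum_iterJoin_le hε hleb hN
      have hcpos : 0 < coverNum (iterJoin (shiftOn f) 𝒲 n) :=
        (coverNum_pos (exists_finite_subcover (continuous_shiftOn f) h𝒲 n)).1
      have hm : m ≤ n := le_trans (le_max_left _ _) (le_trans (le_max_right _ _) hn)
      have hn1 : 1 ≤ n := le_trans (le_max_right _ _) (le_trans (le_max_right _ _) hn)
      have hlog : Real.log (coverNum (iterJoin (shiftOn f) 𝒲 n)) ≤ Real.log N :=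
        Real.log_le_log (by exact_mod_cast hcpos) (by exact_mod_cast hc)
      have hbound : Real.log (coverNum (iterJoin (shiftOn f) 𝒲 n)) ≤ δ * n := by
        have h1 : Real.log N ≤ δ/2 * (n+m) := by exact_mod_cast hNl
        have h2 : δ/2 * ((n:ℝ)+m) ≤ δ/2 * (2*n) := by
          have : ((m:ℝ)) ≤ n := by exact_mod_cast hm
          nlinarith
        calc Real.log (coverNum (iterJoin (shiftOn f) 𝒲 n)) ≤ Real.log N := hlog
          _ ≤ δ/2 * ((n:ℝ)+m) := by push_cast at h1 ⊢; linarith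
          _ ≤ δ/2 * (2*n) := h2
          _ = δ * n := by ring
      rw [EReal.coe_le_coe_iff]
      rw [div_le_iff₀ (by exact_mod_cast hn1 : (0:ℝ) < n)]
      linarith
    have hfin : coverEntropy (shiftOn f) 𝒲 ≤ ((δ:ℝ) : EReal) := limsup_le_of_le (h := hev2)
    rw [hzcoe] at hfin
    exact absurd (lt_of_lt_of_le hzL hfin) (lt_irrefl z)
  exact main

lemma subExp_of_AE {f : ℕ → ℂ} {R : ℝ} (hfb : ∀ k, ‖f k‖ ≤ R) (hAE : AE f ≤ 0) :
    SubExp f := by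
  classical
  haveI := compactSpace_orbitClosure hfb
  intro ε hε δ hδ
  set 𝒰 : Set (Set ↥(orbitClosure f)) :=
    Set.range (fun c : ℂ =>
      Subtype.val ⁻¹' ((fun ξ : ℕ → ℂ => ξ 0) ⁻¹' Metric.ball c (ε/4))) with h𝒰def
  have hcov : IsOpenCover 𝒰 := by
    constructor
    · rintro U ⟨c, rfl⟩
      exact (((continuous_apply 0).comp continuous_subtype_val).isOpen_preimage
        _ Metric.isOpen_ball)
    · apply Set.eq_univ_of_univ_subset
      intro ω _
      refine Set.mem_sUnion.2 ⟨_, ⟨(ω : ℕ → ℂ) 0, rfl⟩, ?_⟩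
      simp only [Set.mem_preimage, Metric.mem_ball, dist_self]
      positivity
  have hce : coverEntropy (shiftOn f) 𝒰 ≤ 0 := by
    refine le_trans ?_ hAE
    apply le_iSup₂ (f := fun 𝒱 (_ : 𝒱 ∈ {𝒱 : Set (Set ↥(orbitClosure f)) | IsOpenCover 𝒱}) =>
      coverEntropy (shiftOn f) 𝒱)
    exact hcov
  have hlt : Filter.atTop.limsup (fun n : ℕ =>
      ((Real.log (coverNum (iterJoin (shiftOn f) 𝒰 n)) / n : ℝ) : EReal)) < ((δ:ℝ) : EReal) :=
    lt_of_le_of_lt hce (by exact_mod_cast hδ)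
  filter_upwards [eventually_lt_of_limsup_lt hlt, eventually_ge_atTop 1] with n hn hn1
  have hreal : Real.log (coverNum (iterJoin (shiftOn f) 𝒰 n)) / n < δ :=
    EReal.coe_lt_coe_iff.1 hn
  obtain ⟨hpos, F, hFsub, hFcov, hFcard⟩ :=
    coverNum_pos (exists_finite_subcover (continuous_shiftOn f) hcov n)
  -- build a net indexed by `F`
  have hdecomp := fun V : {x // x ∈ F} => hFsub (Finset.mem_coe.2 V.2)
  choose u hu hVeq using hdecomp
  have hcen := fun (V : {x // x ∈ F}) (j : Fin n) => hu V j
  choose c hc using hcen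
  set tsel : {x // x ∈ F} → ℕ := fun V => if h : ∃ i, pt f i ∈ (V : Set _) then h.choose else 0
    with htsel
  have key : ∀ (V : {x // x ∈ F}) (i₀ : ℕ), pt f i₀ ∈ (V : Set _) →
      ∀ j : Fin n, dist (f (i₀ + (j:ℕ))) (c V j) < ε/4 := by
    intro V i₀ hmem j
    rw [hVeq V] at hmem
    have := Set.mem_iInter.1 hmem j
    rw [← hc V j] at this
    have h0 : (((shiftOn f)^[(j:ℕ)] (pt f i₀) : ℕ → ℂ)) 0 ∈ Metric.ball (c V j) (ε/4) := this
    rw [shiftOn_iterate_coord, pt_coord] at h0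
    simpa [Metric.mem_ball] using h0
  refine ⟨F.card, ⟨fun s => tsel (F.equivFin.symm s), fun i => ?_⟩, ?_⟩
  · have : pt f i ∈ ⋃₀ (↑F : Set (Set ↥(orbitClosure f))) := hFcov.symm ▸ Set.mem_univ _
    obtain ⟨Vs, hVF, hptV⟩ := this
    set V : {x // x ∈ F} := ⟨Vs, Finset.mem_coe.1 hVF⟩ with hVdef
    refine ⟨F.equivFin V, fun j => ?_⟩
    simp only [Equiv.symm_apply_apply]
    have hex : ∃ i', pt f i' ∈ (V : Set _) := ⟨i, hptV⟩
    have htv : pt f (tsel V) ∈ (V : Set _) := by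
      rw [htsel]
      simp only [dif_pos hex]
      exact hex.choose_spec
    have d1 := key V i hptV j
    have d2 := key V (tsel V) htv j
    calc dist (f (i + (j:ℕ))) (f (tsel V + (j:ℕ)))
        ≤ dist (f (i + (j:ℕ))) (c V j) + dist (f (tsel V + (j:ℕ))) (c V j) :=
          dist_triangle_right _ _ _
      _ < ε/4 + ε/4 := add_lt_add d1 d2
      _ < ε := by linarith
  · rw [hFcard]
    have hn0 : (0:ℝ) < n := by exact_mod_cast hn1
    have := (div_lt_iff₀ hn0).1 hreal
    linarith

end Anqie

namespace Anqie

lemma AE_zero_iff (f : BoundedContinuousFunction ℕ ℂ) : AE ⇑f = 0 ↔ SubExp ⇑f := by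
  constructor
  · intro h
    exact subExp_of_AE f.norm_coe_le_norm h.le
  · intro h
    refine le_antisymm (AE_le_zero f.norm_coe_le_norm h) ?_
    exact zero_le_entropy (shiftOn ⇑f)

lemma isClosed_subExp : IsClosed {f : BoundedContinuousFunction ℕ ℂ | SubExp ⇑f} := by
  refine isClosed_of_closure_subset ?_
  intro g hg
  intro ε hε δ hδ
  obtain ⟨f, hfS, hfg⟩ := Metric.mem_closure_iff.1 hg (ε/8) (by positivity)
  filter_upwards [hfS (ε/2) (by positivity) δ hδ] with n ⟨N, hN, hNl⟩
  refine ⟨N, ?_, hNl⟩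
  have hnear : ∀ k, dist (g k) (f k) ≤ dist g f :=
    fun k => BoundedContinuousFunction.dist_coe_le_dist k
  have := netAt_near hnear hN
  apply netAt_mono ?_ this
  have : dist g f < ε/8 := hfg
  linarith

end Anqie

/-- `E₀ = {f ∈ l∞(ℕ) : AE(f) = 0}` is a unital *-subalgebra of
`l∞(ℕ)` (it contains the constants and is closed under addition, multiplication
and complex conjugation), it is closed in the supremum norm, and it is invariant
under the shift `σ`, `(σ f)(n) = f (n+1)`. -/
theorem zero_entropy_functions_form_shift_invariant_closed_star_subalgebra :
    (1 : BoundedContinuousFunction ℕ ℂ) ∈ {f : BoundedContinuousFunction ℕ ℂ | Anqie.AE ⇑f = 0} ∧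
    (∀ c : ℂ, BoundedContinuousFunction.const ℕ c ∈
      {f : BoundedContinuousFunction ℕ ℂ | Anqie.AE ⇑f = 0}) ∧
    (∀ f g : BoundedContinuousFunction ℕ ℂ,
      Anqie.AE ⇑f = 0 → Anqie.AE ⇑g = 0 → Anqie.AE ⇑(f + g) = 0) ∧
    (∀ f g : BoundedContinuousFunction ℕ ℂ,
      Anqie.AE ⇑f = 0 → Anqie.AE ⇑g = 0 → Anqie.AE ⇑(f * g) = 0) ∧
    (∀ f : BoundedContinuousFunction ℕ ℂ, Anqie.AE ⇑f = 0 → Anqie.AE ⇑(star f) = 0) ∧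
    IsClosed {f : BoundedContinuousFunction ℕ ℂ | Anqie.AE ⇑f = 0} ∧
    (∀ f : BoundedContinuousFunction ℕ ℂ,
      Anqie.AE ⇑f = 0 → Anqie.AE ⇑(Anqie.shiftBCF f) = 0) := by
  have hset : {f : BoundedContinuousFunction ℕ ℂ | Anqie.AE ⇑f = 0}
      = {f : BoundedContinuousFunction ℕ ℂ | Anqie.SubExp ⇑f} :=
    Set.ext fun f => Anqie.AE_zero_iff f
  refine ⟨?_, ?_, ?_, ?_, ?_, ?_, ?_⟩
  · rw [hset]
    show Anqie.SubExp ⇑(1 : BoundedContinuousFunction ℕ ℂ)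
    have : ⇑(1 : BoundedContinuousFunction ℕ ℂ) = fun _ : ℕ => (1:ℂ) := rfl
    rw [this]
    exact Anqie.subExp_const 1
  · intro c
    rw [hset]
    show Anqie.SubExp ⇑(BoundedContinuousFunction.const ℕ c)
    have : ⇑(BoundedContinuousFunction.const ℕ c) = fun _ : ℕ => c := rfl
    rw [this]
    exact Anqie.subExp_const c
  · intro f g hf hg
    rw [Anqie.AE_zero_iff] at hf hg ⊢
    have : ⇑(f + g) = fun k => f k + g k := rfl
    rw [this]
    exact Anqie.subExp_add hf hg
  · intro f g hf hg
    rw [Anqie.AE_zero_iff] at hf hg ⊢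
    have : ⇑(f * g) = fun k => f k * g k := rfl
    rw [this]
    exact Anqie.subExp_mul f.norm_coe_le_norm g.norm_coe_le_norm hf hg
  · intro f hf
    rw [Anqie.AE_zero_iff] at hf ⊢
    have : ⇑(star f) = fun k => (starRingEnd ℂ) (f k) := by
      ext k
      simp [BoundedContinuousFunction.coe_star, Complex.star_def]
    rw [this]
    exact Anqie.subExp_star hf
  · rw [hset]
    exact Anqie.isClosed_subExp
  · intro f hf
    rw [Anqie.AE_zero_iff] at hf ⊢
    have : ⇑(Anqie.shiftBCF f) = fun k => f (k + 1) := rfl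
    rw [this]
    exact Anqie.subExp_shift hf
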